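/- Let Ω ⊆ ℝⁿ be a bounded smooth domain with Poincaré constant κ (i.e. ‖v‖_{L²} ≤ κ‖∇v‖_{L²} for all v ∈ H¹₀(Ω)). Let u_{i-1}, u_i, u_{i+1} ∈ C²(Ω̄) vanish on ∂Ω and suppose Δ(u_{i+1} − u_i) = g on Ω where |g(x)| ≤ L |∇u_i(x) − ∇u_{i-1}(x)| pointwise for some constant L ≥ 0. Then ‖∇(u_{i+1} − u_i)‖_{L²} ≤ L κ ‖∇(u_i − u_{i-1})‖_{L²}. -/

import Mathlib

open MeasureTheory

/-- An open bounded nonempty preconnected subset of ℝ is an open interval. -/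
lemma open_preconnected_eq_Ioo {s : Set ℝ} (ho : IsOpen s) (hb : Bornology.IsBounded s)
    (hne : s.Nonempty) (hc : IsPreconnected s) :
    ∃ a b : ℝ, a < b ∧ s = Set.Ioo a b ∧ a ∉ s ∧ b ∉ s := by
  have hbdd_b : BddBelow s := hb.bddBelow
  have hbdd_a : BddAbove s := hb.bddAbove
  set a := sInf s
  set b := sSup s
  obtain ⟨x, hx⟩ := hne
  obtain ⟨ε, hε, hball⟩ := Metric.isOpen_iff.1 ho x hx
  have hx1 : x - ε/2 ∈ s := by
    apply hball; rw [Metric.mem_ball, Real.dist_eq]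
    rw [show x - ε/2 - x = -(ε/2) by ring, abs_neg, abs_of_nonneg (by linarith)]; linarith
  have hx2 : x + ε/2 ∈ s := by
    apply hball; rw [Metric.mem_ball, Real.dist_eq]
    rw [show x + ε/2 - x = ε/2 by ring]; rw [abs_of_nonneg (by linarith)]; linarith
  have hab : a < b := lt_of_le_of_lt (csInf_le hbdd_b hx1)
    (lt_of_lt_of_le (by linarith) (le_csSup hbdd_a hx2))
  have hanotin : a ∉ s := by
    intro ha
    obtain ⟨δ, hδ, hball'⟩ := Metric.isOpen_iff.1 ho a ha
    have : a - δ/2 ∈ s := by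
      apply hball'; rw [Metric.mem_ball, Real.dist_eq]
      rw [show a - δ/2 - a = -(δ/2) by ring]; rw [abs_neg, abs_of_nonneg (by linarith)]; linarith
    linarith [csInf_le hbdd_b this]
  have hbnotin : b ∉ s := by
    intro hbmem
    obtain ⟨δ, hδ, hball'⟩ := Metric.isOpen_iff.1 ho b hbmem
    have : b + δ/2 ∈ s := by
      apply hball'; rw [Metric.mem_ball, Real.dist_eq]
      rw [show b + δ/2 - b = δ/2 by ring]; rw [abs_of_nonneg (by linarith)]; linarith
    linarith [le_csSup hbdd_a this]
  refine ⟨a, b, hab, ?_, hanotin, hbnotin⟩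
  apply Set.Subset.antisymm
  · intro y hy
    refine ⟨lt_of_le_of_ne (csInf_le hbdd_b hy) ?_, lt_of_le_of_ne (le_csSup hbdd_a hy) ?_⟩
    · intro h; exact hanotin (h ▸ hy)
    · intro h; exact hbnotin (h ▸ hy)
  · exact (IsConnected.Ioo_csInf_csSup_subset ⟨⟨x, hx⟩, hc⟩ hbdd_b hbdd_a)

/-- Integral of the derivative of a C¹ function over a bounded open subset of ℝ
vanishes when the function vanishes on the frontier. -/
lemma integral_deriv_eq_zero_of_frontier {U : Set ℝ} (hU : IsOpen U)
    (hUb : Bornology.IsBounded U) {h : ℝ → ℝ} (hh : ContDiff ℝ 1 h)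
    (hfr : ∀ x ∈ frontier U, h x = 0) :
    ∫ t in U, deriv h t = 0 := by
  classical
  have hderiv_cont : Continuous (deriv h) := hh.continuous_deriv le_rfl
  have hKc : IsCompact (closure U) := Metric.isCompact_of_isClosed_isBounded isClosed_closure hUb.closure
  have hInt : IntegrableOn (deriv h) U := by
    exact (hderiv_cont.continuousOn.integrableOn_compact hKc).mono_set subset_closure
  set c : ℝ → Set ℝ := connectedComponentIn U with hc
  -- each component is an interval with endpoints in the frontier
  have hcomp : ∀ x ∈ U, ∫ t in c x, deriv h t = 0 := by
    intro x hx
    have hopen : IsOpen (c x) := hU.connectedComponentIn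
    have hne : (c x).Nonempty := ⟨x, mem_connectedComponentIn hx⟩
    have hsub : c x ⊆ U := connectedComponentIn_subset U x
    have hpre : IsPreconnected (c x) := isPreconnected_connectedComponentIn
    obtain ⟨a, b, hab, heq, ha, hb⟩ :=
      open_preconnected_eq_Ioo hopen (hUb.subset hsub) hne hpre
    have hxmem : x ∈ Set.Ioo a b := heq ▸ mem_connectedComponentIn hx
    have hfa : a ∉ U := by
      intro haU
      apply ha
      have hIco : Set.Ico a b ⊆ U := by
        intro y hy
        rcases eq_or_lt_of_le hy.1 with h1 | h1
        · exact h1 ▸ haU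
        · exact hsub (heq ▸ ⟨h1, hy.2⟩)
      have hsub' := isPreconnected_Ico.subset_connectedComponentIn
        (Set.mem_Ico.2 ⟨le_of_lt hxmem.1, hxmem.2⟩) hIco
      exact hsub' ⟨le_refl a, hab⟩
    have hfb : b ∉ U := by
      intro hbU
      apply hb
      have hIoc : Set.Ioc a b ⊆ U := by
        intro y hy
        rcases eq_or_lt_of_le hy.2 with h1 | h1
        · exact h1 ▸ hbU
        · exact hsub (heq ▸ ⟨hy.1, h1⟩)
      have hsub' := isPreconnected_Ioc.subset_connectedComponentIn
        (Set.mem_Ioc.2 ⟨hxmem.1, le_of_lt hxmem.2⟩) hIoc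
      exact hsub' ⟨hab, le_refl b⟩
    have hacl : a ∈ closure U := closure_mono hsub (heq ▸ (by
      rw [closure_Ioo hab.ne]; exact ⟨le_refl a, hab.le⟩))
    have hbcl : b ∈ closure U := closure_mono hsub (heq ▸ (by
      rw [closure_Ioo hab.ne]; exact ⟨hab.le, le_refl b⟩))
    have hha : h a = 0 := hfr a ⟨hacl, by simpa [hU.interior_eq] using hfa⟩
    have hhb : h b = 0 := hfr b ⟨hbcl, by simpa [hU.interior_eq] using hfb⟩
    have hftc : ∫ t in a..b, deriv h t = h b - h a :=
      intervalIntegral.integral_deriv_eq_sub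
        (fun y _ => (hh.differentiable one_ne_zero).differentiableAt)
        (hderiv_cont.intervalIntegrable a b)
    rw [heq, ← MeasureTheory.integral_Ioc_eq_integral_Ioo,
      ← intervalIntegral.integral_of_le hab.le, hftc, hha, hhb, sub_zero]
  -- countable decomposition into components
  set S : Set (Set ℝ) := c '' U with hS
  have hScount : S.Countable := by
    have hsub2 : S ⊆ (fun q : ℚ => c (q : ℝ)) '' Set.univ := by
      rintro s ⟨x, hx, rfl⟩
      have hopen : IsOpen (c x) := hU.connectedComponentIn
      have hxc : x ∈ c x := mem_connectedComponentIn hx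
      obtain ⟨ε, hε, hball⟩ := Metric.isOpen_iff.1 hopen x hxc
      obtain ⟨q, hq1, hq2⟩ := exists_rat_btwn (show x - ε < x by linarith)
      have hqc : (q : ℝ) ∈ c x := by
        apply hball; rw [Metric.mem_ball, Real.dist_eq, abs_lt]; constructor <;> linarith
      exact ⟨q, Set.mem_univ q, (connectedComponentIn_eq hqc).symm⟩
    exact (Set.countable_univ.image _).mono hsub2
  have hUeq : U = ⋃₀ S := by
    ext y; constructor
    · intro hy
      exact ⟨c y, ⟨y, hy, rfl⟩, mem_connectedComponentIn hy⟩
    · rintro ⟨s, ⟨z, hz, rfl⟩, hys⟩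
      exact connectedComponentIn_subset U z hys
  haveI : Countable ↥S := hScount.to_subtype
  have hdisj : Pairwise (Function.onFun Disjoint fun s : S => (s : Set ℝ)) := by
    rintro ⟨s, xs, hxs, rfl⟩ ⟨t, xt, hxt, rfl⟩ hst
    simp only [Function.onFun]
    rw [Set.disjoint_left]
    intro z hzs hzt
    apply hst
    apply Subtype.ext
    show c xs = c xt
    rw [hc, connectedComponentIn_eq hzs, connectedComponentIn_eq hzt]
  have hmeas : ∀ s : S, MeasurableSet (s : Set ℝ) := by
    rintro ⟨s, xs, hxs, rfl⟩
    exact hU.connectedComponentIn.measurableSet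
  rw [hUeq, Set.sUnion_eq_iUnion,
    MeasureTheory.integral_iUnion hmeas hdisj (by rw [← Set.sUnion_eq_iUnion, ← hUeq]; exact hInt)]
  rw [tsum_congr (fun s : S => ?_), tsum_zero]
  rcases s with ⟨s, xs, hxs, rfl⟩
  exact hcomp xs hxs

/-- Coordinate bound in Euclidean space. -/
lemma euclid_abs_coord_le {n : ℕ} (x : EuclideanSpace ℝ (Fin n)) (i : Fin n) :
    |x i| ≤ ‖x‖ := by
  rw [EuclideanSpace.norm_eq]
  simp only [Real.norm_eq_abs, sq_abs]
  rw [← Real.sqrt_sq_eq_abs]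
  apply Real.sqrt_le_sqrt
  exact Finset.single_le_sum (f := fun j => x j ^ 2) (fun j _ => sq_nonneg _) (Finset.mem_univ i)

/-- Integral over a bounded open set of a partial derivative of a C¹ function vanishing
on the frontier is zero. -/
lemma integral_partial_eq_zero {n : ℕ} {Ω : Set (EuclideanSpace ℝ (Fin (n+1)))}
    (hΩo : IsOpen Ω) (hΩb : Bornology.IsBounded Ω)
    {φ : EuclideanSpace ℝ (Fin (n+1)) → ℝ} (hφ : ContDiff ℝ 1 φ)
    (hfr : ∀ x ∈ frontier Ω, φ x = 0) (i : Fin (n+1)) :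
    ∫ x in Ω, fderiv ℝ φ x (EuclideanSpace.single i 1) = 0 := by
  classical
  set v : EuclideanSpace ℝ (Fin (n+1)) := EuclideanSpace.single i 1 with hv
  set F : EuclideanSpace ℝ (Fin (n+1)) → ℝ := fun x => fderiv ℝ φ x v with hF
  have hFcont : Continuous F := by
    rw [hF]; exact (hφ.continuous_fderiv one_ne_zero).clm_apply continuous_const
  have hΩm : MeasurableSet Ω := hΩo.measurableSet
  have hIntF : IntegrableOn F Ω := by
    have hKc : IsCompact (closure Ω) :=
      Metric.isCompact_of_isClosed_isBounded isClosed_closure hΩb.closure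
    exact (hFcont.continuousOn.integrableOn_compact hKc).mono_set subset_closure
  set f : EuclideanSpace ℝ (Fin (n+1)) → ℝ := Ω.indicator F with hf
  have hfint : Integrable f := (integrable_indicator_iff hΩm).2 hIntF
  -- the measure preserving equivalence
  set ψ := (MeasurableEquiv.toLp 2 (Fin (n+1) → ℝ)).symm with hψdef
  set e := MeasurableEquiv.piFinSuccAbove (fun _ : Fin (n+1) => ℝ) i with hedef
  set Φe : (ℝ × (Fin n → ℝ)) ≃ᵐ EuclideanSpace ℝ (Fin (n+1)) := e.symm.trans ψ.symm with hΦedef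
  have h1 : MeasurePreserving (⇑ψ.symm) volume volume :=
    (EuclideanSpace.volume_preserving_symm_measurableEquiv_toLp (Fin (n+1))).symm
  have h2 : MeasurePreserving (⇑e.symm) volume volume :=
    (volume_preserving_piFinSuccAbove (fun _ : Fin (n+1) => ℝ) i).symm
  have hΦ : MeasurePreserving (⇑Φe) volume volume := by
    rw [hΦedef, MeasurableEquiv.coe_trans]; exact h1.comp h2
  -- the slice formula
  have hslice : ∀ (y : Fin n → ℝ) (t : ℝ), Φe (t, y) = Φe (0, y) + t • v := by
    intro y t
    ext j
    simp only [hΦedef, hedef, hψdef, hv, MeasurableEquiv.trans_apply,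
      MeasurableEquiv.piFinSuccAbove_symm_apply, MeasurableEquiv.symm_symm, MeasurableEquiv.coe_toLp,
      PiLp.add_apply, PiLp.smul_apply, smul_eq_mul,
      Fin.insertNthEquiv_apply]
    rcases eq_or_ne j i with rfl | hne
    · rw [Fin.insertNth_apply_same, Fin.insertNth_apply_same]
      simp [EuclideanSpace.single_apply]
    · obtain ⟨k, hk⟩ := Fin.exists_succAbove_eq hne
      rw [← hk, Fin.insertNth_apply_succAbove, Fin.insertNth_apply_succAbove]
      simp [EuclideanSpace.single_apply, Fin.succAbove_ne i k]
  -- inner integral vanishes for every slice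
  have hinner : ∀ y : Fin n → ℝ, ∫ t : ℝ, f (Φe (t, y)) = 0 := by
    intro y
    set Lm : ℝ → EuclideanSpace ℝ (Fin (n+1)) := fun t => Φe (0, y) + t • v with hLm
    have hLeq : ∀ t, Φe (t, y) = Lm t := fun t => hslice y t
    have hLder : ∀ t : ℝ, HasDerivAt Lm v t := by
      intro t
      have hsm : HasDerivAt (fun s : ℝ => s • v) ((1:ℝ) • v) t := (hasDerivAt_id t).smul_const v
      simpa [hLm] using hsm.const_add (Φe (0, y))
    have hLcont : Continuous Lm := continuous_const.add (continuous_id.smul continuous_const)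
    set U : Set ℝ := Lm ⁻¹' Ω with hUdef
    have hUopen : IsOpen U := hΩo.preimage hLcont
    have hcoord : ∀ t, Lm t i = t := by
      intro t
      rw [← hLeq]
      simp [hΦedef, hedef, hψdef, MeasurableEquiv.trans_apply,
        MeasurableEquiv.piFinSuccAbove_symm_apply, MeasurableEquiv.symm_symm, MeasurableEquiv.coe_toLp,
        Fin.insertNthEquiv_apply, Fin.insertNth_apply_same]
    have hUb : Bornology.IsBounded U := by
      obtain ⟨R, hR⟩ := hΩb.exists_norm_le
      apply isBounded_iff_forall_norm_le.2 ⟨R, ?_⟩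
      intro t ht
      have h5 : ‖Lm t‖ ≤ R := hR _ ht
      calc ‖t‖ = |Lm t i| := by rw [hcoord t, Real.norm_eq_abs]
        _ ≤ ‖Lm t‖ := euclid_abs_coord_le _ _
        _ ≤ R := h5
    have hhy : ContDiff ℝ 1 (fun t => φ (Lm t)) :=
      hφ.comp (contDiff_const.add (contDiff_id.smul contDiff_const))
    have hder : ∀ t, deriv (fun s => φ (Lm s)) t = F (Lm t) := by
      intro t
      exact ((((hφ.differentiable one_ne_zero) (Lm t)).hasFDerivAt).comp_hasDerivAt t (hLder t)).deriv
    have hfrU : ∀ t ∈ frontier U, (fun s => φ (Lm s)) t = 0 := by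
      intro t ht
      apply hfr
      have h3 : Lm t ∈ closure Ω :=
        map_mem_closure hLcont ht.1 (fun u hu => hu)
      have h4 : Lm t ∉ Ω := (by simpa [hUopen.interior_eq] using ht.2 : t ∉ U)
      rw [frontier, hΩo.interior_eq]; exact ⟨h3, h4⟩
    have h0 := integral_deriv_eq_zero_of_frontier hUopen hUb hhy hfrU
    calc ∫ t : ℝ, f (Φe (t, y))
        = ∫ t : ℝ, U.indicator (deriv (fun s => φ (Lm s))) t := by
          congr 1; funext t
          rw [hLeq t, hf]
          by_cases htU : t ∈ U
          · rw [Set.indicator_of_mem htU, Set.indicator_of_mem (show Lm t ∈ Ω from htU), hder t]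
          · rw [Set.indicator_of_notMem htU,
              Set.indicator_of_notMem (show Lm t ∉ Ω from htU)]
      _ = ∫ t in U, deriv (fun s => φ (Lm s)) t := integral_indicator hUopen.measurableSet
      _ = 0 := h0
  -- assemble via Fubini
  have hstep1 : (∫ x in Ω, fderiv ℝ φ x (EuclideanSpace.single i 1)) = ∫ x, f x := by
    rw [hf, integral_indicator hΩm]
  rw [hstep1, ← hΦ.integral_comp Φe.measurableEmbedding f]
  have hfint' : Integrable (fun p : ℝ × (Fin n → ℝ) => f (Φe p)) volume :=
    (hΦ.integrable_comp_emb Φe.measurableEmbedding).2 hfint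
  rw [MeasureTheory.Measure.volume_eq_prod] at hfint' ⊢
  rw [MeasureTheory.integral_prod_symm _ hfint']
  simp [hinner]

lemma cont_integrableOn {n : ℕ} {Ω : Set (EuclideanSpace ℝ (Fin n))}
    (hΩb : Bornology.IsBounded Ω) {f : EuclideanSpace ℝ (Fin n) → ℝ} (hf : Continuous f) :
    IntegrableOn f Ω := by
  have hKc : IsCompact (closure Ω) :=
    Metric.isCompact_of_isClosed_isBounded isClosed_closure hΩb.closure
  exact (hf.continuousOn.integrableOn_compact hKc).mono_set subset_closure

lemma cs_cont {n : ℕ} {Ω : Set (EuclideanSpace ℝ (Fin n))} (hΩm : MeasurableSet Ω)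
    (hΩb : Bornology.IsBounded Ω) {f g : EuclideanSpace ℝ (Fin n) → ℝ}
    (hf : Continuous f) (hg : Continuous g) :
    ∫ x in Ω, |f x| * |g x| ≤
      Real.sqrt (∫ x in Ω, f x ^ 2) * Real.sqrt (∫ x in Ω, g x ^ 2) := by
  haveI : IsFiniteMeasure (volume.restrict Ω) :=
    ⟨by rw [Measure.restrict_apply_univ]; exact hΩb.measure_lt_top⟩
  have hKc : IsCompact (closure Ω) :=
    Metric.isCompact_of_isClosed_isBounded isClosed_closure hΩb.closure
  have hmem : ∀ {h : EuclideanSpace ℝ (Fin n) → ℝ}, Continuous h →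
      MemLp h (ENNReal.ofReal 2) (volume.restrict Ω) := by
    intro h hh
    rcases (isBounded_iff_forall_norm_le.1 ((hKc.image hh).isBounded)) with ⟨C, hC⟩
    refine MemLp.of_bound hh.aestronglyMeasurable C ?_
    refine ae_restrict_of_forall_mem hΩm (fun x hx => ?_)
    exact hC _ ⟨x, subset_closure hx, rfl⟩
  have hpq : Real.HolderConjugate 2 2 := ⟨by norm_num, by norm_num, by norm_num⟩
  have H := MeasureTheory.integral_mul_norm_le_Lp_mul_Lq (μ := volume.restrict Ω)
    hpq (hmem hf) (hmem hg)
  have e1 : ∀ (h : EuclideanSpace ℝ (Fin n) → ℝ),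
      (∫ x in Ω, ‖h x‖ ^ (2:ℝ)) = ∫ x in Ω, h x ^ 2 := by
    intro h
    refine integral_congr_ae (Filter.Eventually.of_forall fun x => ?_)
    show ‖h x‖ ^ (2:ℝ) = h x ^ 2
    rw [Real.norm_eq_abs, show (2:ℝ) = ((2:ℕ):ℝ) by norm_num, Real.rpow_natCast, sq_abs]
  rw [e1 f, e1 g] at H
  calc ∫ x in Ω, |f x| * |g x| = ∫ x in Ω, ‖f x‖ * ‖g x‖ := by
        simp [Real.norm_eq_abs]
    _ ≤ (∫ x in Ω, f x ^ 2) ^ (1/(2:ℝ)) * (∫ x in Ω, g x ^ 2) ^ (1/(2:ℝ)) := H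
    _ = _ := by
        rw [Real.sqrt_eq_rpow, Real.sqrt_eq_rpow]

lemma ibp_green {n : ℕ} {Ω : Set (EuclideanSpace ℝ (Fin (n+1)))}
    (hΩo : IsOpen Ω) (hΩb : Bornology.IsBounded Ω)
    {w : EuclideanSpace ℝ (Fin (n+1)) → ℝ} (hw : ContDiff ℝ 2 w)
    (hbw : ∀ x ∈ frontier Ω, w x = 0) :
    ∫ x in Ω, ∑ i, (fderiv ℝ w x (EuclideanSpace.single i 1)) ^ 2
      = - ∫ x in Ω, w x * ∑ i, fderiv ℝ (fun y => fderiv ℝ w y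
          (EuclideanSpace.single i 1)) x (EuclideanSpace.single i 1) := by
  classical
  have hwd : Differentiable ℝ w := hw.differentiable two_ne_zero
  have hw1 : ContDiff ℝ 1 w := hw.of_le one_le_two
  have hD : ∀ i : Fin (n+1), ContDiff ℝ 1 (fun x => fderiv ℝ w x (EuclideanSpace.single i 1)) :=
    fun i => (hw.fderiv_right (m := 1) (by norm_num)).clm_apply contDiff_const
  have hDcont : ∀ i, Continuous (fun x => fderiv ℝ w x (EuclideanSpace.single i 1)) :=
    fun i => (hD i).continuous
  have hD2cont : ∀ i, Continuous (fun x => fderiv ℝ (fun y => fderiv ℝ w y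
      (EuclideanSpace.single i 1)) x (EuclideanSpace.single i 1)) :=
    fun i => ((hD i).continuous_fderiv one_ne_zero).clm_apply continuous_const
  have key : ∀ i : Fin (n+1), ∫ x in Ω,
      ((fderiv ℝ w x (EuclideanSpace.single i 1)) ^ 2 + w x * fderiv ℝ (fun y => fderiv ℝ w y
        (EuclideanSpace.single i 1)) x (EuclideanSpace.single i 1)) = 0 := by
    intro i
    have hφ : ContDiff ℝ 1 (fun x => w x * fderiv ℝ w x (EuclideanSpace.single i 1)) :=
      hw1.mul (hD i)
    have hφfr : ∀ x ∈ frontier Ω,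
        (fun x => w x * fderiv ℝ w x (EuclideanSpace.single i 1)) x = 0 := by
      intro x hx; simp [hbw x hx]
    have h0 := integral_partial_eq_zero hΩo hΩb hφ hφfr i
    rw [← h0]
    refine setIntegral_congr_fun hΩo.measurableSet (fun x _ => ?_)
    have h1 : HasFDerivAt w (fderiv ℝ w x) x := (hwd x).hasFDerivAt
    have h2 : HasFDerivAt (fun y => fderiv ℝ w y (EuclideanSpace.single i 1))
        (fderiv ℝ (fun y => fderiv ℝ w y (EuclideanSpace.single i 1)) x) x :=
      (((hD i).differentiable one_ne_zero) x).hasFDerivAt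
    have h3 := (h1.mul h2).fderiv
    simp only [Pi.mul_def] at h3
    rw [h3]
    simp only [ContinuousLinearMap.add_apply, ContinuousLinearMap.smul_apply, smul_eq_mul]
    ring
  have hIsum : ∫ x in Ω, ∑ i, ((fderiv ℝ w x (EuclideanSpace.single i 1)) ^ 2
      + w x * fderiv ℝ (fun y => fderiv ℝ w y (EuclideanSpace.single i 1)) x
        (EuclideanSpace.single i 1)) = 0 := by
    rw [integral_finset_sum _ (f := fun i x => (fderiv ℝ w x (EuclideanSpace.single i 1)) ^ 2
      + w x * fderiv ℝ (fun y => fderiv ℝ w y (EuclideanSpace.single i 1)) x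
        (EuclideanSpace.single i 1)) (fun i _ => cont_integrableOn hΩb
      (((hDcont i).pow 2).add ((hw.continuous).mul (hD2cont i))))]
    simp [key]
  have hsplit : ∫ x in Ω, (∑ i, (fderiv ℝ w x (EuclideanSpace.single i 1)) ^ 2)
      + (w x * ∑ i, fderiv ℝ (fun y => fderiv ℝ w y (EuclideanSpace.single i 1)) x
        (EuclideanSpace.single i 1)) = 0 := by
    rw [← hIsum]
    refine setIntegral_congr_fun hΩo.measurableSet (fun x _ => ?_)
    rw [Finset.mul_sum, ← Finset.sum_add_distrib]
  have hint1 : IntegrableOn (fun x => ∑ i, (fderiv ℝ w x (EuclideanSpace.single i 1)) ^ 2) Ω :=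
    cont_integrableOn hΩb (continuous_finset_sum _ (fun i _ => (hDcont i).pow 2))
  have hint2 : IntegrableOn (fun x => w x * ∑ i, fderiv ℝ (fun y => fderiv ℝ w y
      (EuclideanSpace.single i 1)) x (EuclideanSpace.single i 1)) Ω :=
    cont_integrableOn hΩb ((hw.continuous).mul (continuous_finset_sum _ (fun i _ => hD2cont i)))
  rw [integral_add hint1 hint2] at hsplit
  linarith


/-- Contraction estimate: if `Δ(u_{i+1}−u_i) = g` with `|g| ≤ L|∇u_i − ∇u_{i-1}|`
pointwise, and `κ` is a Poincaré constant for `Ω`, then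
`‖∇(u_{i+1}−u_i)‖_{L²} ≤ Lκ‖∇(u_i−u_{i-1})‖_{L²}`. -/
theorem iteration_contraction_estimate (n : ℕ)
    (Ω : Set (EuclideanSpace ℝ (Fin n))) (hΩo : IsOpen Ω)
    (hΩb : Bornology.IsBounded Ω) (κ L : ℝ) (hκ0 : 0 ≤ κ) (hL : 0 ≤ L)
    (hκ : ∀ v : EuclideanSpace ℝ (Fin n) → ℝ, ContDiff ℝ 2 v →
      (∀ x ∈ frontier Ω, v x = 0) →
      Real.sqrt (∫ x in Ω, (v x) ^ 2) ≤
        κ * Real.sqrt (∫ x in Ω, ∑ i, (fderiv ℝ v x (EuclideanSpace.single i 1)) ^ 2))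
    (um u up g : EuclideanSpace ℝ (Fin n) → ℝ)
    (hum : ContDiff ℝ 2 um) (hu : ContDiff ℝ 2 u) (hup : ContDiff ℝ 2 up)
    (hbdm : ∀ x ∈ frontier Ω, um x = 0) (hbd : ∀ x ∈ frontier Ω, u x = 0)
    (hbdp : ∀ x ∈ frontier Ω, up x = 0)
    (hlap : ∀ x ∈ Ω,
      (∑ i, fderiv ℝ (fun y => fderiv ℝ (fun z => up z - u z) y
        (EuclideanSpace.single i 1)) x (EuclideanSpace.single i 1)) = g x)
    (hg : ∀ x ∈ Ω, |g x| ≤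
      L * Real.sqrt (∑ i, (fderiv ℝ u x (EuclideanSpace.single i 1)
        - fderiv ℝ um x (EuclideanSpace.single i 1)) ^ 2)) :
    Real.sqrt (∫ x in Ω, ∑ i,
        (fderiv ℝ (fun z => up z - u z) x (EuclideanSpace.single i 1)) ^ 2) ≤
      L * κ * Real.sqrt (∫ x in Ω, ∑ i,
        (fderiv ℝ (fun z => u z - um z) x (EuclideanSpace.single i 1)) ^ 2) := by
  classical
  rcases n with _ | m
  · simp only [Finset.univ_eq_empty, Finset.sum_empty, integral_zero, Real.sqrt_zero]
    positivity
  have hΩm : MeasurableSet Ω := hΩo.measurableSet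
  have hw : ContDiff ℝ 2 (fun z => up z - u z) := hup.sub hu
  have hv : ContDiff ℝ 2 (fun z => u z - um z) := hu.sub hum
  have hbw : ∀ x ∈ frontier Ω, (fun z => up z - u z) x = 0 := by
    intro x hx; simp [hbdp x hx, hbd x hx]
  have hbv : ∀ x ∈ frontier Ω, (fun z => u z - um z) x = 0 := by
    intro x hx; simp [hbd x hx, hbdm x hx]
  set A := ∫ x in Ω, ∑ i,
    (fderiv ℝ (fun z => up z - u z) x (EuclideanSpace.single i 1)) ^ 2 with hAdef
  set Cv := ∫ x in Ω, ∑ i,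
    (fderiv ℝ (fun z => u z - um z) x (EuclideanSpace.single i 1)) ^ 2 with hCdef
  have hA0 : 0 ≤ A :=
    setIntegral_nonneg hΩm (fun x _ => Finset.sum_nonneg fun i _ => sq_nonneg _)
  have hC0 : 0 ≤ Cv :=
    setIntegral_nonneg hΩm (fun x _ => Finset.sum_nonneg fun i _ => sq_nonneg _)
  -- continuity facts
  have hDw : ∀ i : Fin (m+1), Continuous
      (fun x => fderiv ℝ (fun z => up z - u z) x (EuclideanSpace.single i 1)) :=
    fun i => (hw.continuous_fderiv two_ne_zero).clm_apply continuous_const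
  have hDv : ∀ i : Fin (m+1), Continuous
      (fun x => fderiv ℝ (fun z => u z - um z) x (EuclideanSpace.single i 1)) :=
    fun i => (hv.continuous_fderiv two_ne_zero).clm_apply continuous_const
  have hD2w : ∀ i : Fin (m+1), Continuous (fun x => fderiv ℝ (fun y =>
      fderiv ℝ (fun z => up z - u z) y (EuclideanSpace.single i 1)) x
      (EuclideanSpace.single i 1)) := by
    intro i
    have hD : ContDiff ℝ 1 (fun x => fderiv ℝ (fun z => up z - u z) x
        (EuclideanSpace.single i 1)) :=
      (hw.fderiv_right (m := 1) (by norm_num)).clm_apply contDiff_const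
    exact (hD.continuous_fderiv one_ne_zero).clm_apply continuous_const
  set s : EuclideanSpace ℝ (Fin (m+1)) → ℝ := fun x => Real.sqrt (∑ i,
    (fderiv ℝ (fun z => u z - um z) x (EuclideanSpace.single i 1)) ^ 2) with hsdef
  have hscont : Continuous s :=
    Real.continuous_sqrt.comp (continuous_finset_sum _ (fun i _ => (hDv i).pow 2))
  have hs0 : ∀ x, 0 ≤ s x := fun x => Real.sqrt_nonneg _
  set Δw : EuclideanSpace ℝ (Fin (m+1)) → ℝ := fun x => ∑ i, fderiv ℝ (fun y =>
    fderiv ℝ (fun z => up z - u z) y (EuclideanSpace.single i 1)) x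
    (EuclideanSpace.single i 1) with hΔdef
  have hΔcont : Continuous Δw := continuous_finset_sum _ (fun i _ => hD2w i)
  -- hg rewritten in terms of s
  have hg' : ∀ x ∈ Ω, |Δw x| ≤ L * s x := by
    intro x hx
    have heq : ∀ j : Fin (m+1), fderiv ℝ (fun z => u z - um z) x (EuclideanSpace.single j 1)
        = fderiv ℝ u x (EuclideanSpace.single j 1) - fderiv ℝ um x (EuclideanSpace.single j 1) := by
      intro j
      rw [fderiv_fun_sub ((hu.differentiable two_ne_zero) x) ((hum.differentiable two_ne_zero) x)]
      simp
    have : Δw x = g x := hlap x hx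
    rw [this, hsdef]
    simp only [heq]
    exact hg x hx
  -- integration by parts
  have hgreen : A = - ∫ x in Ω, (fun z => up z - u z) x * Δw x :=
    ibp_green hΩo hΩb hw hbw
  -- Chain of estimates
  have habs : A ≤ ∫ x in Ω, |(fun z => up z - u z) x| * (L * s x) := by
    rw [hgreen]
    calc - ∫ x in Ω, (fun z => up z - u z) x * Δw x
        ≤ |∫ x in Ω, (fun z => up z - u z) x * Δw x| := neg_le_abs _
      _ ≤ ∫ x in Ω, |(fun z => up z - u z) x| * |Δw x| :=
          by
            have := MeasureTheory.norm_integral_le_integral_norm (μ := volume.restrict Ω)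
              (fun x => (fun z => up z - u z) x * Δw x)
            simpa [Real.norm_eq_abs] using this
      _ ≤ ∫ x in Ω, |(fun z => up z - u z) x| * (L * s x) := by
          refine setIntegral_mono_on
            (cont_integrableOn hΩb (hw.continuous.abs.mul hΔcont.abs))
            (cont_integrableOn hΩb (hw.continuous.abs.mul (continuous_const.mul hscont)))
            hΩm (fun x hx => ?_)
          exact mul_le_mul_of_nonneg_left (hg' x hx) (abs_nonneg _)
  have hfac : ∫ x in Ω, |(fun z => up z - u z) x| * (L * s x)
      = L * ∫ x in Ω, |(fun z => up z - u z) x| * s x := by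
    rw [← integral_const_mul]
    exact setIntegral_congr_fun hΩm (fun x _ => by ring)
  have hCS : ∫ x in Ω, |(fun z => up z - u z) x| * s x ≤
      Real.sqrt (∫ x in Ω, ((fun z => up z - u z) x) ^ 2) * Real.sqrt Cv := by
    have h1 := cs_cont hΩm hΩb hw.continuous hscont
    have h2 : ∫ x in Ω, |(fun z => up z - u z) x| * s x
        = ∫ x in Ω, |(fun z => up z - u z) x| * |s x| := by
      refine setIntegral_congr_fun hΩm (fun x _ => ?_)
      rw [abs_of_nonneg (hs0 x)]
    have h3 : (∫ x in Ω, s x ^ 2) = Cv := by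
      rw [hCdef]
      refine setIntegral_congr_fun hΩm (fun x _ => ?_)
      rw [hsdef]
      exact Real.sq_sqrt (Finset.sum_nonneg fun i _ => sq_nonneg _)
    rw [h2, ← h3]
    exact h1
  have hpoin : Real.sqrt (∫ x in Ω, ((fun z => up z - u z) x) ^ 2) ≤ κ * Real.sqrt A :=
    hκ (fun z => up z - u z) hw hbw
  -- combine
  have hmain : A ≤ L * κ * Real.sqrt Cv * Real.sqrt A := by
    have h4 : A ≤ L * (Real.sqrt (∫ x in Ω, ((fun z => up z - u z) x) ^ 2) * Real.sqrt Cv) := by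
      calc A ≤ ∫ x in Ω, |(fun z => up z - u z) x| * (L * s x) := habs
        _ = L * ∫ x in Ω, |(fun z => up z - u z) x| * s x := hfac
        _ ≤ L * (Real.sqrt (∫ x in Ω, ((fun z => up z - u z) x) ^ 2) * Real.sqrt Cv) :=
            mul_le_mul_of_nonneg_left hCS hL
    have h5 : Real.sqrt (∫ x in Ω, ((fun z => up z - u z) x) ^ 2) * Real.sqrt Cv
        ≤ (κ * Real.sqrt A) * Real.sqrt Cv :=
      mul_le_mul_of_nonneg_right hpoin (Real.sqrt_nonneg _)
    calc A ≤ L * (Real.sqrt (∫ x in Ω, ((fun z => up z - u z) x) ^ 2) * Real.sqrt Cv) := h4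
      _ ≤ L * ((κ * Real.sqrt A) * Real.sqrt Cv) := mul_le_mul_of_nonneg_left h5 hL
      _ = L * κ * Real.sqrt Cv * Real.sqrt A := by ring
  by_cases hz : Real.sqrt A = 0
  · rw [hz]; positivity
  · have hpos : 0 < Real.sqrt A := lt_of_le_of_ne (Real.sqrt_nonneg A) (Ne.symm hz)
    have h6 : Real.sqrt A * Real.sqrt A ≤ (L * κ * Real.sqrt Cv) * Real.sqrt A := by
      rw [Real.mul_self_sqrt hA0]; exact hmain
    exact le_of_mul_le_mul_right h6 hpos
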